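/- Involution of the conserved functionals: suppose Ω₀(H₀ξ,y) = ξ(y) defines H₀, Hₖ = RᵏH₀, Ωₖ = Ω₀∘Rᵏ with Ω₀ compatible with R and alternating, and suppose ζₙ = i_{Rⁿx₀}Ω₀ = dIₙ for functionals Iₙ. Then for all i, j in the index set and all k ≥ 0, the Poisson bracket {I_i, I_j}_{H_k} := (H_k dI_i)(I_j) vanishes; in particular it reduces to Ω_{i+j+k}(x₀, x₀) = 0 by skewness. -/
import Mathlib


/-- Involution of the conserved functionals: with `Ω₀(H₀ξ,y) = ξ(y)` defining
`H₀` (on 1-forms), `Hₖ = RᵏH₀`, `Ω₀` alternating and compatible with `R`, and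
functionals `Iₙ` whose differentials are `ζₙ = i_{Rⁿx₀}Ω₀` (i.e.
`y·Iₙ = Ω₀(Rⁿx₀, y)`), the Poisson brackets `{I_i, I_j}_{H_k} = (H_k dI_i)·I_j`
all vanish. -/
theorem conserved_functionals_in_involution
    {F X : Type*} [CommRing F] [Algebra ℝ F] [LieRing X] [LieAlgebra ℝ X]
    [Module F X]
    (ρ : X → F → F)
    (hρadd : ∀ (x : X) (a b : F), ρ x (a + b) = ρ x a + ρ x b)
    (hρderiv : ∀ (x : X) (a b : F), ρ x (a * b) = ρ x a * b + a * ρ x b)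
    (hρaddX : ∀ (x y : X) (a : F), ρ (x + y) a = ρ x a + ρ y a)
    (hρsmulX : ∀ (a : F) (x : X) (b : F), ρ (a • x) b = a * ρ x b)
    (R : X →ₗ[F] X)
    (Ω : X →ₗ[F] X →ₗ[F] F)
    (halt : ∀ x : X, Ω x x = 0)
    (hcompat : ∀ x y : X, Ω (R x) y = Ω x (R y))
    (H₀ : (X → F) → X)
    (hH : ∀ ξ : X → F,
      ((∀ y z : X, ξ (y + z) = ξ y + ξ z) ∧
        ∀ (a : F) (y : X), ξ (a • y) = a * ξ y) →
      ∀ y : X, Ω (H₀ ξ) y = ξ y)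
    (x₀ : X) (I : ℕ → F)
    -- dIₙ = ζₙ, i.e. y·Iₙ = Ω₀(Rⁿx₀, y) for all y
    (hdI : ∀ (n : ℕ) (y : X), ρ y (I n) = Ω ((R ^ n) x₀) y) :
    ∀ i j k : ℕ,
      ρ ((R ^ k) (H₀ (fun y => ρ y (I i)))) (I j) = 0 := by

  intro i j k
  have hskew : ∀ x y : X, Ω x y = - Ω y x := by
    intro x y
    have h := halt (x + y)
    simp only [map_add, LinearMap.add_apply, halt] at h
    linear_combination h
  have hpow : ∀ (n : ℕ) (x y : X), Ω ((R ^ n) x) y = Ω x ((R ^ n) y) := by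
    intro n
    induction n with
    | zero => simp
    | succ n ih =>
      intro x y
      have hc : R ((R ^ n) y) = (R ^ n) (R y) := by
        rw [← Module.End.mul_apply, ← pow_succ', pow_succ, Module.End.mul_apply]
      rw [pow_succ, Module.End.mul_apply, ih, hcompat, hc, Module.End.mul_apply]
  have hlin : ((∀ y z : X, (fun y => ρ y (I i)) (y + z) = (fun y => ρ y (I i)) y + (fun y => ρ y (I i)) z) ∧
        ∀ (a : F) (y : X), (fun y => ρ y (I i)) (a • y) = a * (fun y => ρ y (I i)) y) := by
    constructor
    · intro y z; simp only [hdI, map_add]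
    · intro a y; simp only [hdI, map_smul, smul_eq_mul]
  have hHξ := hH (fun y => ρ y (I i)) hlin
  set H := H₀ (fun y => ρ y (I i)) with hHdef
  have zero2 : ∀ a : F, a + a = 0 → a = 0 := by
    intro a h
    have : a = (1/2 : ℝ) • (a + a) := by
      rw [smul_add, ← add_smul]
      norm_num
    rw [this, h, smul_zero]
  have key : ρ ((R ^ k) H) (I j) = - Ω x₀ ((R ^ (i + k + j)) x₀) := by
    rw [hdI, ← hpow k, hskew, hHξ]
    simp only [hdI]
    rw [hpow i, ← Module.End.mul_apply, ← Module.End.mul_apply, ← pow_add, ← pow_add]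
  rw [key]
  have h1 : Ω x₀ ((R ^ (i + k + j)) x₀) = - Ω x₀ ((R ^ (i + k + j)) x₀) := by
    conv_lhs => rw [← hpow]
    exact hskew _ _
  have := zero2 _ (by linear_combination h1 : Ω x₀ ((R ^ (i + k + j)) x₀) + Ω x₀ ((R ^ (i + k + j)) x₀) = 0)
  rw [this, neg_zero]
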